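/- Let F be a field and n, m ≥ 1. Let J be the 2m×2m block matrix [[I_m, 0], [0, −Ω_m]] and K the 2m×2m block matrix [[Ω_m, 0], [0, I_m]], and let P be the 4nm×4nm block-diagonal matrix whose first n diagonal 2m×2m blocks all equal J and whose last n diagonal 2m×2m blocks all equal K. Then P is invertible with P² = I, it satisfies P·Ω_{4nm}·Pᵀ = Ψ_{2n} ⊗ Ψ_{2m}, and consequently for every A ∈ Sp_{2n}(F) and B ∈ Sp_{2m}(F) the matrix ρ_SP(A,B) := P⁻¹·(A ⊗ B)·P lies in SO_{4nm}(F). -/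

import Mathlib

open Matrix

/-- The `d × d` exchange matrix `Ω_d`: entry 1 exactly when (1-based) `i + j = d + 1`. -/
def omegaMat (F : Type*) [CommRing F] (d : ℕ) : Matrix (Fin d) (Fin d) F :=
  fun i j => if (i : ℕ) + (j : ℕ) + 1 = d then 1 else 0

/-- `SO_d(F)`: the set of `d × d` matrices with `A · Ω_d · Aᵀ = Ω_d` and `det A = 1`. -/
def SOset (F : Type*) [CommRing F] (d : ℕ) : Set (Matrix (Fin d) (Fin d) F) :=
  {A | A * omegaMat F d * Aᵀ = omegaMat F d ∧ A.det = 1}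

/-- `Ψ_{2n} = [[0, Ω_n], [−Ω_n, 0]]`. -/
def PsiMat (F : Type*) [CommRing F] (n : ℕ) : Matrix (Fin (2*n)) (Fin (2*n)) F :=
  fun i j => if (i : ℕ) + (j : ℕ) + 1 = 2*n then (if (i : ℕ) < n then 1 else -1) else 0

/-- `Sp_{2n}(F)`: the set of `2n × 2n` matrices with `A · Ψ_{2n} · Aᵀ = Ψ_{2n}`. -/
def SpSet (F : Type*) [CommRing F] (n : ℕ) : Set (Matrix (Fin (2*n)) (Fin (2*n)) F) :=
  {A | A * PsiMat F n * Aᵀ = PsiMat F n}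

/-- Kronecker product, regarded as an `(nm) × (nm)` matrix via the lexicographic
identification sending the (1-based) pair `(i,k)` to `m(i−1)+k`. -/
def kron {F : Type*} [CommRing F] {n m : ℕ} (A : Matrix (Fin n) (Fin n) F)
    (B : Matrix (Fin m) (Fin m) F) : Matrix (Fin (n*m)) (Fin (n*m)) F :=
  Matrix.reindex finProdFinEquiv finProdFinEquiv (Matrix.kroneckerMap (· * ·) A B)

/-- 1-based matrix unit `E_{i,j}` in `M_d(F)`. -/
def Eunit (F : Type*) [CommRing F] (d : ℕ) (i j : ℕ) : Matrix (Fin d) (Fin d) F :=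
  fun p q => if (p : ℕ) + 1 = i ∧ (q : ℕ) + 1 = j then 1 else 0

/-- Entry function (0-based) of the `2m × 2m` block `J = [[I_m, 0], [0, −Ω_m]]`. -/
def Jent (F : Type*) [CommRing F] (m r c : ℕ) : F :=
  if r < m ∧ c < m then (if r = c then 1 else 0)
  else if m ≤ r ∧ m ≤ c then (if r + c + 1 = 3*m then -1 else 0)
  else 0

/-- Entry function (0-based) of the `2m × 2m` block `K = [[Ω_m, 0], [0, I_m]]`. -/
def Kent (F : Type*) [CommRing F] (m r c : ℕ) : F :=
  if r < m ∧ c < m then (if r + c + 1 = m then 1 else 0)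
  else if m ≤ r ∧ m ≤ c then (if r = c then 1 else 0)
  else 0

/-- The `4nm × 4nm` block-diagonal matrix `P` whose first `n` diagonal `2m × 2m` blocks
equal `J` and whose last `n` diagonal blocks equal `K`. -/
def Pmat (F : Type*) [CommRing F] (n m : ℕ) :
    Matrix (Fin ((2*n)*(2*m))) (Fin ((2*n)*(2*m))) F :=
  fun p q =>
    if (p : ℕ) / (2*m) = (q : ℕ) / (2*m) then
      (if (p : ℕ) / (2*m) < n then Jent F m ((p : ℕ) % (2*m)) ((q : ℕ) % (2*m))
       else Kent F m ((p : ℕ) % (2*m)) ((q : ℕ) % (2*m)))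
    else 0

/-! ### Auxiliary: generalized permutation matrices -/

section GPM
variable {F : Type*} [CommRing F]

/-- A "generalized permutation matrix": entry `s p` in position `(p, f p)`, zero elsewhere. -/
def gpm {ι : Type*} [DecidableEq ι] (f : ι → ι) (s : ι → F) : Matrix ι ι F :=
  Matrix.of fun p q => if q = f p then s p else 0

lemma gpm_apply {ι : Type*} [DecidableEq ι] (f : ι → ι) (s : ι → F) (p q : ι) :
    gpm f s p q = if q = f p then s p else 0 := rfl

lemma gpm_congr {ι : Type*} [DecidableEq ι] {f g : ι → ι} {s t : ι → F}
    (hf : ∀ p, f p = g p) (hs : ∀ p, s p = t p) : gpm f s = gpm g t := by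
  ext p q; rw [gpm_apply, gpm_apply, hf, hs]

lemma gpm_mul {ι : Type*} [DecidableEq ι] [Fintype ι] (f g : ι → ι) (s t : ι → F) :
    gpm f s * gpm g t = gpm (fun p => g (f p)) (fun p => s p * t (f p)) := by
  ext p q
  simp only [gpm, Matrix.mul_apply, of_apply, ite_mul, zero_mul]
  rw [Finset.sum_ite_eq' Finset.univ (f p)]
  simp only [Finset.mem_univ, if_true, mul_ite, mul_zero]

lemma gpm_transpose {ι : Type*} [DecidableEq ι] (f : ι → ι) (s : ι → F)
    (hf : ∀ p, f (f p) = p) (hs : ∀ p, s (f p) = s p) : (gpm f s)ᵀ = gpm f s := by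
  ext p q
  simp only [transpose_apply, gpm, of_apply]
  by_cases h : q = f p
  · subst h; simp [hf, hs]
  · rw [if_neg h, if_neg]; intro hc; exact h (by rw [hc, hf])

lemma gpm_id_one {ι : Type*} [DecidableEq ι] :
    gpm (fun p : ι => p) (fun _ => (1 : F)) = 1 := by
  ext p q; simp [gpm, one_apply, eq_comm]

lemma gpm_kron {ι κ : Type*} [DecidableEq ι] [DecidableEq κ] (f : ι → ι) (g : κ → κ)
    (s : ι → F) (t : κ → F) :
    kroneckerMap (· * ·) (gpm f s) (gpm g t)
      = gpm (Prod.map f g) (fun x => s x.1 * t x.2) := by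
  ext ⟨i, r⟩ ⟨j, c⟩
  by_cases h1 : j = f i <;> by_cases h2 : c = g r <;>
    simp [gpm, kroneckerMap_apply, Prod.ext_iff, h1, h2]

lemma gpm_reindex {ι κ : Type*} [DecidableEq ι] [DecidableEq κ] (e : ι ≃ κ)
    (f : ι → ι) (s : ι → F) :
    reindex e e (gpm f s) = gpm (fun p => e (f (e.symm p))) (fun p => s (e.symm p)) := by
  ext p q
  simp [gpm, reindex_apply, submatrix_apply, Equiv.symm_apply_eq]

lemma reindex_mul {ι κ : Type*} [Fintype ι] [Fintype κ] (e : ι ≃ κ)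
    (M N : Matrix ι ι F) : reindex e e M * reindex e e N = reindex e e (M * N) := by
  simp [reindex_apply, Matrix.submatrix_mul_equiv]

lemma reindex_transpose {ι κ : Type*} (e : ι ≃ κ) (M : Matrix ι ι F) :
    (reindex e e M)ᵀ = reindex e e Mᵀ := by
  simp [reindex_apply, transpose_submatrix]

end GPM

/-! ### The specific permutation data for `P`, `Ω` and `Ψ ⊗ Ψ` -/

/-- Underlying index permutation of `P` on the product index set. -/
def fP (n m : ℕ) : Fin (2*n) × Fin (2*m) → Fin (2*n) × Fin (2*m) := fun x =>
  (x.1,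
    if _h : (x.1 : ℕ) < n then
      (if h2 : (x.2 : ℕ) < m then x.2 else ⟨3*m-1-(x.2:ℕ), by have := x.2.isLt; omega⟩)
    else
      (if h2 : (x.2 : ℕ) < m then ⟨m-1-(x.2:ℕ), by have := x.2.isLt; omega⟩ else x.2))

/-- Sign data of `P`. -/
def sP (F : Type*) [CommRing F] (n m : ℕ) : Fin (2*n) × Fin (2*m) → F := fun x =>
  if (x.1 : ℕ) < n ∧ m ≤ (x.2 : ℕ) then -1 else 1

/-- Sign data of `Ψ`. -/
def sPsi (F : Type*) [CommRing F] (n : ℕ) : Fin (2*n) → F := fun i =>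
  if (i : ℕ) < n then 1 else -1

@[simp] lemma fP_fst (n m : ℕ) (x : Fin (2*n) × Fin (2*m)) : (fP n m x).1 = x.1 := rfl

@[simp] lemma fP_snd_val (n m : ℕ) (x : Fin (2*n) × Fin (2*m)) :
    (((fP n m x).2 : Fin (2*m)) : ℕ)
      = if (x.1 : ℕ) < n then (if (x.2 : ℕ) < m then (x.2:ℕ) else 3*m-1-(x.2:ℕ))
        else (if (x.2 : ℕ) < m then m-1-(x.2:ℕ) else (x.2:ℕ)) := by
  simp only [fP]
  split_ifs <;> rfl

section KeyLemmas
variable {F : Type*} [CommRing F]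

lemma fP_invol (n m : ℕ) (x : Fin (2*n) × Fin (2*m)) : fP n m (fP n m x) = x := by
  have hr := x.2.isLt
  refine Prod.ext rfl (Fin.ext ?_)
  simp only [fP_snd_val, fP_fst]
  split_ifs <;> omega

lemma sP_fP (n m : ℕ) (x : Fin (2*n) × Fin (2*m)) : sP F n m (fP n m x) = sP F n m x := by
  have hr := x.2.isLt
  simp only [sP, fP_fst, fP_snd_val]
  split_ifs <;> first | rfl | (exfalso; omega)

lemma sP_sq (n m : ℕ) (x : Fin (2*n) × Fin (2*m)) : sP F n m x * sP F n m x = 1 := by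
  simp only [sP]; split_ifs <;> ring

lemma rev_pair (n m : ℕ) (i : Fin (2*n)) (r : Fin (2*m)) :
    finProdFinEquiv (i.rev, r.rev) = (finProdFinEquiv (i, r) : Fin ((2*n)*(2*m))).rev := by
  have hi := i.isLt; have hr := r.isLt
  apply Fin.ext
  have h0 : ∀ (a : Fin (2*n)) (b : Fin (2*m)),
      ((finProdFinEquiv (a, b) : Fin ((2*n)*(2*m))) : ℕ) = (b:ℕ) + 2*m*(a:ℕ) := fun a b => rfl
  simp only [h0, Fin.val_rev]
  have h1 : (r:ℕ) + 1 ≤ 2*m := hr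
  have h2 : (i:ℕ) + 1 ≤ 2*n := hi
  have h4 : 2*m*((i:ℕ)+1) ≤ 2*m*(2*n) := Nat.mul_le_mul_left _ h2
  have h5 : 2*m*((i:ℕ)+1) = 2*m*(i:ℕ) + 2*m := by ring
  have h6 : 2*m*(2*n) = 2*n*(2*m) := by ring
  have h3 : (r:ℕ) + 2*m*(i:ℕ) + 1 ≤ 2*n*(2*m) := by linarith
  zify [h1, h2, h3]
  ring

lemma fP_rev_fP (n m : ℕ) (x : Fin (2*n) × Fin (2*m)) :
    fP n m (Prod.map Fin.rev Fin.rev (fP n m x)) = Prod.map Fin.rev Fin.rev x := by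
  have hi := x.1.isLt; have hr := x.2.isLt
  refine Prod.ext rfl (Fin.ext ?_)
  simp only [fP_snd_val, fP_fst, Prod.map_fst, Prod.map_snd, Fin.val_rev]
  split_ifs <;> omega

lemma sP_rev_fP (n m : ℕ) (x : Fin (2*n) × Fin (2*m)) :
    sP F n m x * sP F n m (Prod.map Fin.rev Fin.rev (fP n m x))
      = sPsi F n x.1 * sPsi F m x.2 := by
  have hi := x.1.isLt; have hr := x.2.isLt
  simp only [sP, sPsi, fP_fst, fP_snd_val, Prod.map_fst, Prod.map_snd, Fin.val_rev]
  split_ifs <;> first | ring1 | (exfalso; omega)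

lemma sPsi_rev (n : ℕ) (p : Fin (2*n)) : sPsi F n p * sPsi F n p.rev = -1 := by
  have hp := p.isLt
  simp only [sPsi, Fin.val_rev]
  split_ifs <;> first | ring1 | (exfalso; omega)

/-! ### gpm presentations of the concrete matrices -/

lemma PsiMat_eq (n : ℕ) : PsiMat F n = gpm Fin.rev (sPsi F n) := by
  ext p q
  have hp := p.isLt; have hq := q.isLt
  simp only [PsiMat, gpm, of_apply, sPsi, Fin.ext_iff, Fin.val_rev]
  split_ifs <;> first | rfl | omega | (exfalso; omega)

lemma omegaMat_eq (d : ℕ) : omegaMat F d = gpm Fin.rev (fun _ => (1:F)) := by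
  ext p q
  have hp := p.isLt; have hq := q.isLt
  simp only [omegaMat, gpm, of_apply, Fin.ext_iff, Fin.val_rev]
  split_ifs <;> first | rfl | omega | (exfalso; omega)

lemma Pmat_key (n m : ℕ) (x y : Fin (2*n) × Fin (2*m)) :
    Pmat F n m (finProdFinEquiv x) (finProdFinEquiv y) = gpm (fP n m) (sP F n m) x y := by
  obtain ⟨i, r⟩ := x; obtain ⟨j, c⟩ := y
  have hi := i.isLt; have hr := r.isLt; have hj := j.isLt; have hc := c.isLt
  have hm : 0 < 2*m := by omega
  have hval : ∀ (a : Fin (2*n)) (b : Fin (2*m)),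
      ((finProdFinEquiv (a, b) : Fin ((2*n)*(2*m))) : ℕ) = (b:ℕ) + 2*m*(a:ℕ) := fun a b => rfl
  have hdiv : ∀ (a : Fin (2*n)) (b : Fin (2*m)), ((b:ℕ) + 2*m*(a:ℕ)) / (2*m) = (a:ℕ) := by
    intro a b
    rw [Nat.add_mul_div_left _ _ hm, Nat.div_eq_of_lt b.isLt, Nat.zero_add]
  have hmod : ∀ (a : Fin (2*n)) (b : Fin (2*m)), ((b:ℕ) + 2*m*(a:ℕ)) % (2*m) = (b:ℕ) := by
    intro a b
    rw [Nat.add_mul_mod_self_left, Nat.mod_eq_of_lt b.isLt]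
  simp only [Pmat, hval, hdiv, hmod, gpm, of_apply, fP, sP, Jent, Kent, Prod.mk.injEq,
    Fin.ext_iff, Fin.val_mk]
  split_ifs <;> simp -failIfUnchanged only [Fin.val_mk] at * <;> first | rfl | omega | (exfalso; omega)

lemma Pmat_eq (n m : ℕ) :
    Pmat F n m = reindex finProdFinEquiv finProdFinEquiv (gpm (fP n m) (sP F n m)) := by
  ext p q
  rw [reindex_apply, submatrix_apply, ← Pmat_key, Equiv.apply_symm_apply, Equiv.apply_symm_apply]

/-! ### kron lemmas -/

lemma kron_mul {a b : ℕ} (A B : Matrix (Fin a) (Fin a) F) (C D : Matrix (Fin b) (Fin b) F) :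
    kron A C * kron B D = kron (A*B) (C*D) := by
  unfold kron
  rw [reindex_mul]
  congr 1
  exact (Matrix.mul_kronecker_mul A B C D).symm

lemma kron_transpose {a b : ℕ} (A : Matrix (Fin a) (Fin a) F) (B : Matrix (Fin b) (Fin b) F) :
    (kron A B)ᵀ = kron Aᵀ Bᵀ := by
  unfold kron
  rw [reindex_transpose, ← kroneckerMap_transpose]

lemma kron_det {a b : ℕ} (A : Matrix (Fin a) (Fin a) F) (B : Matrix (Fin b) (Fin b) F) :
    (kron A B).det = A.det ^ b * B.det ^ a := by
  unfold kron
  rw [Matrix.det_reindex_self]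
  exact (Matrix.det_kronecker A B).trans (by rw [Fintype.card_fin, Fintype.card_fin])

/-! ### Ψ · Ψ = -1 and determinants of symplectic matrices -/

lemma Psi_mul_Psi (k : ℕ) : PsiMat F k * PsiMat F k = -1 := by
  rw [PsiMat_eq, gpm_mul]
  ext p q
  rw [gpm_apply, Fin.rev_rev, sPsi_rev]
  by_cases h : q = p
  · rw [if_pos h, h, Matrix.neg_apply, Matrix.one_apply_eq]
  · rw [if_neg h, Matrix.neg_apply, Matrix.one_apply_ne (fun hc => h hc.symm), neg_zero]

end KeyLemmas

section DetPart
variable {F : Type*} [Field F]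

lemma Sp_det_sq (k : ℕ) (A : Matrix (Fin (2*k)) (Fin (2*k)) F) (hA : A ∈ SpSet F k) :
    A.det * A.det = 1 := by
  have hA' : A * PsiMat F k * Aᵀ = PsiMat F k := hA
  have hPsi2 : PsiMat F k * PsiMat F k = (-1 : Matrix (Fin (2*k)) (Fin (2*k)) F) :=
    Psi_mul_Psi k
  have hdet1 : (PsiMat F k).det * (PsiMat F k).det = 1 := by
    rw [← Matrix.det_mul, hPsi2]
    have : (-1 : Matrix (Fin (2*k)) (Fin (2*k)) F) = -(1 : Matrix _ _ F) := rfl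
    rw [this, Matrix.det_neg, Matrix.det_one, mul_one, Fintype.card_fin, pow_mul]
    norm_num
  have hne : (PsiMat F k).det ≠ 0 := by
    intro h
    rw [h, mul_zero] at hdet1
    exact zero_ne_one hdet1
  have := congrArg Matrix.det hA'
  rw [Matrix.det_mul, Matrix.det_mul, Matrix.det_transpose] at this
  have h2 : A.det * A.det * (PsiMat F k).det = 1 * (PsiMat F k).det := by
    rw [one_mul]; linear_combination this
  exact mul_right_cancel₀ hne h2

end DetPart

/-- the block-diagonal matrix `P` (blocks `J`, then `K`) is invertible with
`P² = I`, satisfies `P · Ω_{4nm} · Pᵀ = Ψ_{2n} ⊗ Ψ_{2m}`, and conjugating the Kronecker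
product of symplectic matrices by `P` lands in `SO_{4nm}(F)`. -/
theorem Pmat_conj_kron_mem_SO (F : Type*) [Field F] (n m : ℕ) (hn : 1 ≤ n) (hm : 1 ≤ m) :
    IsUnit (Pmat F n m) ∧
    Pmat F n m * Pmat F n m = 1 ∧
    Pmat F n m * omegaMat F ((2*n)*(2*m)) * (Pmat F n m)ᵀ
        = kron (PsiMat F n) (PsiMat F m) ∧
    ∀ A ∈ SpSet F n, ∀ B ∈ SpSet F m,
      (Pmat F n m)⁻¹ * kron A B * Pmat F n m ∈ SOset F ((2*n)*(2*m)) := by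
  classical
  have hPeq := Pmat_eq (F := F) n m
  -- P * P = 1
  have hG : gpm (fP n m) (sP F n m) * gpm (fP n m) (sP F n m) = 1 := by
    rw [gpm_mul]
    have e1 : (fun p => fP n m (fP n m p)) = (fun p : Fin (2*n) × Fin (2*m) => p) :=
      funext (fP_invol n m)
    have e2 : (fun p => sP F n m p * sP F n m (fP n m p))
        = (fun _ : Fin (2*n) × Fin (2*m) => (1:F)) :=
      funext (fun p => by rw [sP_fP]; exact sP_sq n m p)
    rw [e1, e2]
    exact gpm_id_one
  have hPP : Pmat F n m * Pmat F n m = 1 := by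
    rw [hPeq, reindex_mul, hG]
    simp [reindex_apply, Matrix.submatrix_one_equiv]
  -- P is symmetric
  have hPT : (Pmat F n m)ᵀ = Pmat F n m := by
    rw [hPeq, reindex_transpose, gpm_transpose _ _ (fP_invol n m) (sP_fP n m)]
  -- P Ω Pᵀ = Ψ ⊗ Ψ
  have hOm : omegaMat F ((2*n)*(2*m))
      = reindex finProdFinEquiv finProdFinEquiv
          (gpm (Prod.map Fin.rev Fin.rev) (fun _ => (1:F))) := by
    rw [omegaMat_eq, gpm_reindex]
    apply gpm_congr
    · intro p
      rw [show Prod.map Fin.rev Fin.rev (finProdFinEquiv.symm p)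
            = ((finProdFinEquiv.symm p).1.rev, (finProdFinEquiv.symm p).2.rev) from rfl,
        rev_pair, Prod.mk.eta, Equiv.apply_symm_apply]
    · intro p; rfl
  have hPO : Pmat F n m * omegaMat F ((2*n)*(2*m)) * (Pmat F n m)ᵀ
      = kron (PsiMat F n) (PsiMat F m) := by
    rw [hPT, hPeq, hOm, reindex_mul, reindex_mul, gpm_mul, gpm_mul]
    unfold kron
    rw [PsiMat_eq, PsiMat_eq, gpm_kron]
    congr 1
    apply gpm_congr
    · intro p; exact fP_rev_fP n m p
    · intro p; rw [mul_one]; exact sP_rev_fP n m p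
  refine ⟨⟨⟨Pmat F n m, Pmat F n m, hPP, hPP⟩, rfl⟩, hPP, hPO, ?_⟩
  intro A hA B hB
  have hA' : A * PsiMat F n * Aᵀ = PsiMat F n := hA
  have hB' : B * PsiMat F m * Bᵀ = PsiMat F m := hB
  have hPinv : (Pmat F n m)⁻¹ = Pmat F n m := Matrix.inv_eq_right_inv hPP
  set P := Pmat F n m with hPdef
  set K := kron A B with hKdef
  set W := kron (PsiMat F n) (PsiMat F m) with hWdef
  set Om := omegaMat F ((2*n)*(2*m)) with hOmdef
  have h2 : P * Om * P = W := by rw [← hPO, hPT]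
  have h3 : K * W * Kᵀ = W := by
    rw [hKdef, hWdef, kron_transpose, kron_mul, kron_mul, hA', hB']
  refine ⟨?_, ?_⟩
  · -- orthogonality
    show P⁻¹ * K * P * Om * (P⁻¹ * K * P)ᵀ = Om
    rw [hPinv, Matrix.transpose_mul, Matrix.transpose_mul, hPT]
    calc P * K * P * Om * (P * (Kᵀ * P))
        = (P * K) * (P * Om * P) * (Kᵀ * P) := by simp only [Matrix.mul_assoc]
      _ = (P * K) * W * (Kᵀ * P) := by rw [h2]
      _ = P * (K * W * Kᵀ) * P := by simp only [Matrix.mul_assoc]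
      _ = P * W * P := by rw [h3]
      _ = P * (P * Om * P) * P := by rw [h2]
      _ = (P * P) * Om * (P * P) := by simp only [Matrix.mul_assoc]
      _ = Om := by rw [hPP, Matrix.one_mul, Matrix.mul_one]
  · -- determinant
    show ((P⁻¹ * K * P).det = 1)
    rw [hPinv, Matrix.det_mul, Matrix.det_mul]
    have hdetP2 : P.det * P.det = 1 := by
      rw [← Matrix.det_mul, hPP, Matrix.det_one]
    have hdetK : K.det = 1 := by
      rw [hKdef, kron_det]
      have hA2 : A.det ^ (2*m) = 1 := by
        rw [pow_mul, sq, Sp_det_sq n A hA, one_pow]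
      have hB2 : B.det ^ (2*n) = 1 := by
        rw [pow_mul, sq, Sp_det_sq m B hB, one_pow]
      rw [hA2, hB2, mul_one]
    rw [hdetK, mul_one]
    exact hdetP2
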